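/- Let p/q = [a_1,…,a_n] be an irreducible fraction with 0 < p/q < 1 and N = a_1 + ⋯ + a_n − 1. Then the cluster variable X_{p/q} equals (D/(x_1 x_2 ⋯ x_N)) · Σ_{γ ∈ Γ_{p/q}} w(γ), where D = Π_{i=1}^N (the denominator of the Laurent monomial w(T_i)). -/

import Mathlib

/-!
Ancestral triangles of continued fractions (Yamada / Farey diagrams),
following "Cluster variables and Alexander polynomials of 2-bridge knots".
-/

noncomputable section

open scoped BigOperators

attribute [local instance] Classical.propDecidable

namespace TwoBridge

/-- The continued fraction `[a₁,…,aₙ] = 1/(a₁ + 1/(a₂ + ⋯ + 1/aₙ))`. -/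
def cf : List ℕ → ℚ
  | [] => 0
  | a :: t => 1 / ((a : ℚ) + cf t)

/-- Partial sums `l_k = a₁ + ⋯ + a_k`. -/
def ell (a : List ℕ) (k : ℕ) : ℕ := (a.take k).sum

/-- The index of the fan containing the `i`-th triangle (1-based): the least `k` with
`i ≤ l_k − 1`.  Fan 1 consists of `T_1, …, T_{a₁−1}` and, for `k ≥ 2`, fan `k` consists of
`T_{l_{k−1}}, …, T_{l_k − 1}`. -/
def fanIdx (a : List ℕ) (i : ℕ) : ℕ := sInf {k | i < ell a k}

/-- The `i`-th triangle (1-based) of the ancestral triangle of `[a₁,…,aₙ]` is a *right*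
triangle iff it lies in an odd-indexed fan (first `a₁ − 1` triangles are right, the next
`a₂` left, the next `a₃` right, and so on alternately). -/
def isRight (a : List ℕ) (i : ℕ) : Prop := Odd (fanIdx a i)

/-- Vertex indices of the ancestral triangle: `0 ↦ 0/1`, `1 ↦ 1/1`, and `j + 1 ↦` the apex
(new vertex) of the triangle `T_j`.  `edgeIdx a i` is the pair of vertex indices
(left endpoint, right endpoint) of the most recently created edge after stacking `i`
triangles; the triangle `T_{i+1}` is stacked on this edge. -/
def edgeIdx (a : List ℕ) : ℕ → ℕ × ℕ
  | 0 => (0, 1)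
  | i + 1 => if isRight a (i + 1) then ((edgeIdx a i).1, i + 2) else (i + 2, (edgeIdx a i).2)

/-- The labels (numerator, denominator) of the endpoints of the active edge after stacking
`i` triangles; the new vertex of each triangle is labelled by the mediant of the two
endpoints of the edge it is stacked on. -/
def edgeLbl (a : List ℕ) : ℕ → (ℕ × ℕ) × (ℕ × ℕ)
  | 0 => ((0, 1), (1, 1))
  | i + 1 =>
      if isRight a (i + 1) then
        ((edgeLbl a i).1,
          ((edgeLbl a i).1.1 + (edgeLbl a i).2.1, (edgeLbl a i).1.2 + (edgeLbl a i).2.2))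
      else
        (((edgeLbl a i).1.1 + (edgeLbl a i).2.1, (edgeLbl a i).1.2 + (edgeLbl a i).2.2),
          (edgeLbl a i).2)

/-- The label (numerator, denominator) of the vertex with index `v`. -/
def vtxLabel (a : List ℕ) (v : ℕ) : ℕ × ℕ :=
  if v = 0 then (0, 1)
  else if v = 1 then (1, 1)
  else ((edgeLbl a (v - 2)).1.1 + (edgeLbl a (v - 2)).2.1,
        (edgeLbl a (v - 2)).1.2 + (edgeLbl a (v - 2)).2.2)

/-- `u` and `w` are joined by an edge of the ancestral triangle. -/
def IsEdgeAT (a : List ℕ) (u w : ℕ) : Prop :=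
  (u = 0 ∧ w = 1) ∨ (u = 1 ∧ w = 0) ∨
    (2 ≤ u ∧ (w = (edgeIdx a (u - 2)).1 ∨ w = (edgeIdx a (u - 2)).2)) ∨
    (2 ≤ w ∧ (u = (edgeIdx a (w - 2)).1 ∨ u = (edgeIdx a (w - 2)).2))

/-- A step of a path: an edge of the ancestral triangle along which the denominator of the
vertex label strictly decreases. -/
def IsStep (a : List ℕ) (u w : ℕ) : Prop :=
  IsEdgeAT a u w ∧ (vtxLabel a w).2 < (vtxLabel a u).2

/-- `IsPathFrom a s γ` : `γ` is a path of the ancestral triangle of `a` starting at the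
vertex with index `s` and ending at `0/1` or `1/1`, the denominator of the label strictly
decreasing along every edge. -/
def IsPathFrom (a : List ℕ) (s : ℕ) (γ : List ℕ) : Prop :=
  γ.head? = some s ∧ (γ.getLast? = some 0 ∨ γ.getLast? = some 1) ∧ List.Chain' (IsStep a) γ

/-- The (indices of the) triangles cut off to the left of the path by a single step from
vertex `u` down to vertex `w`. -/
def stepLeft (a : List ℕ) (u w : ℕ) : Finset ℕ :=
  if 2 ≤ u ∧ w = (edgeIdx a (u - 2)).2 then Finset.Ioc (w - 1) (u - 1) else ∅

/-- The set `S_γ` of (indices of) triangles lying on the left side of the path `γ`. -/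
def pathLeftSet (a : List ℕ) (γ : List ℕ) : Finset ℕ :=
  (γ.zip γ.tail).foldr (fun p s => stepLeft a p.1 p.2 ∪ s) ∅



/-- The ambient field: rational functions in the `2N` variables
`x₁, …` (indexed by `Sum.inl`) and `y₁, …` (indexed by `Sum.inr`). -/
abbrev KK : Type := FractionRing (MvPolynomial (ℕ ⊕ ℕ) ℚ)

/-- The initial cluster variables `x_i`, with the convention `x_{l_n} = x_{N+1} = 1`
(note `a.sum = N + 1`). -/
def xv (a : List ℕ) (i : ℕ) : KK :=
  if i = a.sum then 1
  else algebraMap (MvPolynomial (ℕ ⊕ ℕ) ℚ) KK (MvPolynomial.X (Sum.inl i))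

/-- The coefficient variables `y_i`. -/
def yv (i : ℕ) : KK := algebraMap (MvPolynomial (ℕ ⊕ ℕ) ℚ) KK (MvPolynomial.X (Sum.inr i))

/-- The weight `w(T_i)` of the `i`-th triangle. -/
def triW (a : List ℕ) (i : ℕ) : KK :=
  if i = 1 then (if isRight a 1 then yv 1 * xv a 2 else yv 1 / xv a 2)
  else if isRight a i then
    (if isRight a (i - 1) then yv i * xv a (i + 1) / xv a (i - 1)
     else yv i * xv a (i - 1) * xv a (i + 1))
  else
    (if isRight a (i - 1) then yv i / (xv a (i - 1) * xv a (i + 1))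
     else yv i * xv a (i - 1) / xv a (i + 1))

/-- The denominator of the Laurent monomial `w(T_i)`. -/
def triDen (a : List ℕ) (i : ℕ) : KK :=
  if i = 1 then (if isRight a 1 then 1 else xv a 2)
  else if isRight a i then (if isRight a (i - 1) then xv a (i - 1) else 1)
  else (if isRight a (i - 1) then xv a (i - 1) * xv a (i + 1) else xv a (i + 1))

/-- The weight `w(γ) = ∏_{T_i ∈ S_γ} w(T_i)` of a path `γ`. -/
def pathW (a : List ℕ) (γ : List ℕ) : KK := ∏ i ∈ pathLeftSet a γ, triW a i

/-- A seed (with principal coefficients): an `N`-tuple of rational functions, an `N`-tuple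
of elements of the tropical semifield `Trop(y₁,…,y_N)` (recorded as exponent vectors:
the tropical monomial `∏ y_j ^ (e j)` is recorded as `e : ℕ → ℤ`), and a skew-symmetric
integer matrix.  (Indices `1, …, N` are used; values outside this range are irrelevant.) -/
structure Seed where
  /-- the cluster variables -/
  X : ℕ → KK
  /-- the coefficient tuple, as tropical exponent vectors -/
  u : ℕ → ℕ → ℤ
  /-- the exchange matrix -/
  B : ℕ → ℕ → ℤ

/-- Evaluation of a tropical monomial (exponent vector) in the ambient field. -/
def tropEval (a : List ℕ) (e : ℕ → ℤ) : KK :=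
  ∏ i ∈ Finset.Icc 1 (a.sum - 1), yv i ^ e i

/-- Mutation of a seed in direction `k`.  Note that in the tropical semifield
`u_k ⊕ 1` has exponent vector `i ↦ min (u_k i) 0`. -/
def mutate (a : List ℕ) (s : Seed) (k : ℕ) : Seed where
  B := fun i j =>
    if i = k ∨ j = k then -s.B i j
    else s.B i j + (s.B i k).sign * max (s.B i k * s.B k j) 0
  u := fun j i =>
    if j = k then -s.u k i
    else s.u j i + max (s.B k j) 0 * s.u k i + (-s.B k j) * min (s.u k i) 0
  X := fun j =>
    if j = k then
      ((∏ i ∈ Finset.Icc 1 (a.sum - 1), s.X i ^ max (-s.B i k) 0) +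
          tropEval a (s.u k) * ∏ i ∈ Finset.Icc 1 (a.sum - 1), s.X i ^ max (s.B i k) 0) /
        (tropEval a (fun i => min (s.u k i) 0) * s.X k)
    else s.X j

/-- The initial seed attached to the ancestral triangle of `a`: initial cluster variables
`x₁, …, x_N`, principal coefficients `y₁, …, y_N`, and the matrix of the initial quiver
`Q₀`, which has an arrow from `i+1` to `i` if `T_i` is a right triangle and an arrow from
`i` to `i+1` if `T_i` is a left triangle. -/
def initSeed (a : List ℕ) : Seed where
  X := fun i => xv a i
  u := fun j i => if i = j then 1 else 0
  B := fun i j =>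
    if 1 ≤ i ∧ j = i + 1 ∧ j ≤ a.sum - 1 then (if isRight a i then -1 else 1)
    else if 1 ≤ j ∧ i = j + 1 ∧ i ≤ a.sum - 1 then (if isRight a j then 1 else -1)
    else 0

/-- The seed `μ_k ∘ μ_{k-1} ∘ ⋯ ∘ μ_1 (x₀, y₀, Q₀)`. -/
def seedAfter (a : List ℕ) (k : ℕ) : Seed :=
  (List.range' 1 k).foldl (mutate a) (initSeed a)

/-- The cluster variable `X_{p/q}` attached to the ancestral triangle of `a`
(`p/q = [a₁,…,aₙ]`): the `N`-th entry of the cluster of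
`μ_N ∘ ⋯ ∘ μ_1 (x₀, y₀, Q₀)`, where `N = a₁ + ⋯ + aₙ − 1`. -/
def clusterVar (a : List ℕ) : KK := (seedAfter a (a.sum - 1)).X (a.sum - 1)



/-! ### Auxiliary lemmas -/

section Aux

variable (a : List ℕ)

lemma xv_ne_zero (i : ℕ) : xv a i ≠ 0 := by
  unfold xv
  split_ifs
  · exact one_ne_zero
  · intro h
    exact MvPolynomial.X_ne_zero (Sum.inl i)
      (IsFractionRing.injective (MvPolynomial (ℕ ⊕ ℕ) ℚ) KK (by simpa using h))

lemma yv_ne_zero (i : ℕ) : yv i ≠ 0 := by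
  intro h
  exact MvPolynomial.X_ne_zero (Sum.inr i)
    (IsFractionRing.injective (MvPolynomial (ℕ ⊕ ℕ) ℚ) KK (by simpa [yv] using h))

lemma triDen_ne_zero (i : ℕ) : triDen a i ≠ 0 := by
  unfold triDen
  split_ifs <;>
    simp [xv_ne_zero, mul_ne_zero, one_ne_zero]

lemma triW_ne_zero (i : ℕ) : triW a i ≠ 0 := by
  unfold triW
  split_ifs <;>
    simp [xv_ne_zero, yv_ne_zero, mul_ne_zero, div_ne_zero]

/-- Entries of `edgeIdx a i` are at most `i + 1`. -/
lemma edgeIdx_le (i : ℕ) : (edgeIdx a i).1 ≤ i + 1 ∧ (edgeIdx a i).2 ≤ i + 1 := by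
  induction i with
  | zero => simp [edgeIdx]
  | succ n ih =>
      rw [edgeIdx]
      split_ifs <;> constructor <;> simp <;> omega

lemma edgeIdx_snd_pos (i : ℕ) : 1 ≤ (edgeIdx a i).2 := by
  induction i with
  | zero => simp [edgeIdx]
  | succ n ih =>
      rw [edgeIdx]
      split_ifs <;> simp <;> omega

lemma edgeIdx_ne (i : ℕ) : (edgeIdx a i).1 ≠ (edgeIdx a i).2 := by
  induction i with
  | zero => simp [edgeIdx]
  | succ n ih =>
      rw [edgeIdx]
      have h := edgeIdx_le a n
      split_ifs <;> simp <;> omega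

/-- Denominators of the active edge labels are positive. -/
lemma edgeLbl_den_pos (i : ℕ) : 1 ≤ (edgeLbl a i).1.2 ∧ 1 ≤ (edgeLbl a i).2.2 := by
  induction i with
  | zero => simp [edgeLbl]
  | succ n ih =>
      rw [edgeLbl]
      split_ifs <;> constructor <;> simp <;> omega

/-- The vertex labels of the active edge endpoints. -/
lemma vtxLabel_edgeIdx (i : ℕ) :
    vtxLabel a (edgeIdx a i).1 = (edgeLbl a i).1 ∧
      vtxLabel a (edgeIdx a i).2 = (edgeLbl a i).2 := by
  induction i with
  | zero => simp [edgeIdx, edgeLbl, vtxLabel]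
  | succ n ih =>
      have hv : vtxLabel a (n + 2) =
          ((edgeLbl a n).1.1 + (edgeLbl a n).2.1, (edgeLbl a n).1.2 + (edgeLbl a n).2.2) := by
        rw [vtxLabel]
        simp
      rw [edgeIdx, edgeLbl]
      split_ifs <;> constructor <;> simp [ih.1, ih.2, hv]


/-- The denominator of the label of the vertex `i + 2` (the apex of `T_{i+1}`). -/
lemma vtxLabel_den (v : ℕ) (hv : 2 ≤ v) :
    (vtxLabel a v).2 = (edgeLbl a (v - 2)).1.2 + (edgeLbl a (v - 2)).2.2 := by
  rw [vtxLabel]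
  have h0 : v ≠ 0 := by omega
  have h1 : v ≠ 1 := by omega
  simp [h0, h1]

lemma edgeLbl_densum_mono : StrictMono (fun i => (edgeLbl a i).1.2 + (edgeLbl a i).2.2) := by
  apply strictMono_nat_of_lt_succ
  intro n
  have h := edgeLbl_den_pos a n
  rw [edgeLbl]
  split_ifs <;> simp <;> omega

lemma vtxLabel_den_one_le (v : ℕ) : 1 ≤ (vtxLabel a v).2 := by
  rcases Nat.lt_or_ge v 2 with h | h
  · interval_cases v <;> simp [vtxLabel]
  · rw [vtxLabel_den a v h]
    have := edgeLbl_den_pos a (v - 2)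
    omega

lemma vtxLabel_den_lt (v w : ℕ) (hv : 1 ≤ v) (hvw : v < w) :
    (vtxLabel a v).2 < (vtxLabel a w).2 := by
  have hw : 2 ≤ w := by omega
  rw [vtxLabel_den a w hw]
  rcases Nat.lt_or_ge v 2 with h | h
  · have hv1 : v = 1 := by omega
    have h2 := edgeLbl_den_pos a (w - 2)
    simp [hv1, vtxLabel]
    omega
  · rw [vtxLabel_den a v h]
    exact edgeLbl_densum_mono a (by omega : v - 2 < w - 2)

/-- Characterization of the steps of a path: from a vertex `u ≥ 2` one can step exactly
to the two endpoints of the base edge of the triangle whose apex is `u`. -/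
lemma isStep_iff (u w : ℕ) :
    IsStep a u w ↔ 2 ≤ u ∧ (w = (edgeIdx a (u - 2)).1 ∨ w = (edgeIdx a (u - 2)).2) := by
  constructor
  · rintro ⟨he, hden⟩
    rcases he with ⟨hu, hw⟩ | ⟨hu, hw⟩ | ⟨hu, hw⟩ | ⟨hw, hu⟩
    · subst hu; subst hw; simp [vtxLabel] at hden
    · subst hu; subst hw; simp [vtxLabel] at hden
    · exact ⟨hu, hw⟩
    · exfalso
      have hle := edgeIdx_le a (w - 2)
      have huw : u < w := by rcases hu with h | h <;> omega
      rcases Nat.eq_zero_or_pos u with h0 | h0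
      · subst h0
        have h1 := vtxLabel_den_one_le a w
        have h2 : (vtxLabel a 0).2 = 1 := by simp [vtxLabel]
        omega
      · exact absurd (vtxLabel_den_lt a u w h0 huw) (by omega)
  · rintro ⟨hu, hw⟩
    have hlbl := vtxLabel_edgeIdx a (u - 2)
    have hpos := edgeLbl_den_pos a (u - 2)
    have hden : (vtxLabel a u).2 = (edgeLbl a (u - 2)).1.2 + (edgeLbl a (u - 2)).2.2 :=
      vtxLabel_den a u hu
    refine ⟨Or.inr (Or.inr (Or.inl ⟨hu, hw⟩)), ?_⟩
    rcases hw with rfl | rfl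
    · rw [hlbl.1, hden]; omega
    · rw [hlbl.2, hden]; omega


/-! ### Paths and their weights -/

/-- The set of paths starting at the vertex `v`. -/
def pathSet (a : List ℕ) (v : ℕ) : Set (List ℕ) := {γ | IsPathFrom a v γ}

/-- The sum of the weights of all paths starting at the vertex `v`. -/
def PS (a : List ℕ) (v : ℕ) : KK := ∑ᶠ γ ∈ pathSet a v, pathW a γ

lemma pathW_single (v : ℕ) : pathW a [v] = 1 := by
  simp [pathW, pathLeftSet]

lemma pathSet_bot (v : ℕ) (hv : v ≤ 1) : pathSet a v = {[v]} := by
  ext γ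
  simp only [pathSet, Set.mem_setOf_eq, Set.mem_singleton_iff]
  constructor
  · rintro ⟨hh, hl, hc⟩
    rcases γ with _ | ⟨u, t⟩
    · simp at hh
    · obtain rfl : v = u := by symm; simpa using hh
      rcases t with _ | ⟨w, t'⟩
      · rfl
      · exfalso
        have hstep : IsStep a v w := (List.isChain_cons_cons.mp hc).1
        have := (isStep_iff a v w).mp hstep
        omega
  · rintro rfl
    refine ⟨rfl, ?_, List.isChain_singleton v⟩
    interval_cases v
    · left; rfl
    · right; rfl

lemma pathSet_rec (v : ℕ) (hv : 2 ≤ v) :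
    pathSet a v = (List.cons v '' pathSet a (edgeIdx a (v - 2)).1) ∪
      (List.cons v '' pathSet a (edgeIdx a (v - 2)).2) := by
  ext γ
  simp only [pathSet, Set.mem_setOf_eq, Set.mem_union, Set.mem_image]
  constructor
  · rintro ⟨hh, hl, hc⟩
    rcases γ with _ | ⟨u, t⟩
    · simp at hh
    · obtain rfl : v = u := by symm; simpa using hh
      rcases t with _ | ⟨w, t'⟩
      · exfalso
        simp [List.getLast?] at hl
        omega
      · have hstep : IsStep a v w := (List.isChain_cons_cons.mp hc).1
        have hc' : List.Chain' (IsStep a) (w :: t') := (List.isChain_cons_cons.mp hc).2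
        have hl' : (w :: t').getLast? = some 0 ∨ (w :: t').getLast? = some 1 := by
          rwa [List.getLast?_cons_cons] at hl
        have hmem : IsPathFrom a w (w :: t') := ⟨rfl, hl', hc'⟩
        rcases ((isStep_iff a v w).mp hstep).2 with h | h
        · exact Or.inl ⟨w :: t', by rw [← h]; exact hmem, rfl⟩
        · exact Or.inr ⟨w :: t', by rw [← h]; exact hmem, rfl⟩
  · have key : ∀ b, b = (edgeIdx a (v - 2)).1 ∨ b = (edgeIdx a (v - 2)).2 →
        ∀ t, IsPathFrom a b t → IsPathFrom a v (v :: t) := by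
      rintro b hb t ⟨hh, hl, hc⟩
      rcases t with _ | ⟨w, t'⟩
      · simp at hh
      · obtain rfl : b = w := by simpa using hh.symm
        refine ⟨rfl, by rwa [List.getLast?_cons_cons], ?_⟩
        exact List.isChain_cons_cons.mpr ⟨(isStep_iff a v b).mpr ⟨hv, hb⟩, hc⟩
    rintro (⟨t, ht, rfl⟩ | ⟨t, ht, rfl⟩)
    · exact key _ (Or.inl rfl) t ht
    · exact key _ (Or.inr rfl) t ht

lemma pathSet_finite (v : ℕ) : (pathSet a v).Finite := by
  induction v using Nat.strong_induction_on with
  | _ v ih =>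
    rcases Nat.lt_or_ge v 2 with h | h
    · rw [pathSet_bot a v (by omega)]
      exact Set.finite_singleton _
    · rw [pathSet_rec a v h]
      have h1 := edgeIdx_le a (v - 2)
      exact Set.Finite.union
        ((ih _ (by omega)).image _) ((ih _ (by omega)).image _)

lemma pathLeftSet_cons (u w : ℕ) (t : List ℕ) :
    pathLeftSet a (u :: w :: t) = stepLeft a u w ∪ pathLeftSet a (w :: t) := rfl

lemma pathLeftSet_bound : ∀ (γ : List ℕ) (v : ℕ), List.Chain' (IsStep a) γ →
    γ.head? = some v → ∀ x ∈ pathLeftSet a γ, 1 ≤ x ∧ x < v := by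
  intro γ
  induction γ with
  | nil => intro v _ hh; simp at hh
  | cons u t ih =>
    intro v hc hh x hx
    obtain rfl : v = u := by symm; simpa using hh
    rcases t with _ | ⟨w, t'⟩
    · simp [pathLeftSet] at hx
    · have hstep : IsStep a v w := (List.isChain_cons_cons.mp hc).1
      have hc' : List.Chain' (IsStep a) (w :: t') := (List.isChain_cons_cons.mp hc).2
      have hv2 : 2 ≤ v := ((isStep_iff a v w).mp hstep).1
      have hwv : w < v := by
        have h1 := edgeIdx_le a (v - 2)
        rcases ((isStep_iff a v w).mp hstep).2 with h | h <;> omega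
      rw [pathLeftSet_cons] at hx
      rcases Finset.mem_union.mp hx with h | h
      · unfold stepLeft at h
        split_ifs at h with hcond
        · have := Finset.mem_Ioc.mp h
          omega
        · simp at h
      · have := ih w hc' rfl x h
        omega

lemma pathW_cons (v w : ℕ) (t : List ℕ) (hc : List.Chain' (IsStep a) (w :: t)) :
    pathW a (v :: w :: t) = (∏ i ∈ stepLeft a v w, triW a i) * pathW a (w :: t) := by
  unfold pathW
  rw [pathLeftSet_cons, Finset.prod_union]
  rw [Finset.disjoint_left]
  intro x hx hx'
  have h2 := pathLeftSet_bound a (w :: t) w hc rfl x hx'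
  unfold stepLeft at hx
  split_ifs at hx with hcond
  · have := Finset.mem_Ioc.mp hx
    omega
  · simp at hx

lemma PS_bot (v : ℕ) (hv : v ≤ 1) : PS a v = 1 := by
  rw [PS, pathSet_bot a v hv, finsum_mem_singleton, pathW_single]

lemma PS_rec (v : ℕ) (hv : 2 ≤ v) :
    PS a v = PS a (edgeIdx a (v - 2)).1 +
      (∏ i ∈ Finset.Icc (edgeIdx a (v - 2)).2 (v - 1), triW a i) * PS a (edgeIdx a (v - 2)).2 := by
  set b1 := (edgeIdx a (v - 2)).1 with hb1
  set b2 := (edgeIdx a (v - 2)).2 with hb2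
  have hne : b1 ≠ b2 := edgeIdx_ne a (v - 2)
  have hb2pos : 1 ≤ b2 := edgeIdx_snd_pos a (v - 2)
  have hdisj : Disjoint (List.cons v '' pathSet a b1) (List.cons v '' pathSet a b2) := by
    rw [Set.disjoint_left]
    rintro γ ⟨t1, ht1, rfl⟩ ⟨t2, ht2, ht2e⟩
    have : t1 = t2 := by injection ht2e.symm
    subst this
    have h1 : t1.head? = some b1 := ht1.1
    have h2 : t1.head? = some b2 := ht2.1
    rw [h1] at h2
    exact hne (by injection h2)
  have hinj : ∀ b : ℕ, Set.InjOn (List.cons v) (pathSet a b) := by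
    intro b x hx y hy h
    injection h
  rw [PS, pathSet_rec a v hv,
    finsum_mem_union hdisj ((pathSet_finite a b1).image _) ((pathSet_finite a b2).image _),
    finsum_mem_image (hinj b1), finsum_mem_image (hinj b2)]
  congr 1
  · apply finsum_mem_congr rfl
    intro t ht
    rcases t with _ | ⟨w, t'⟩
    · exact absurd ht.1 (by simp)
    · have hw : w = b1 := by have := ht.1; simpa using this
      rw [pathW_cons a v w t' ht.2.2]
      have hsl : stepLeft a v w = ∅ := by
        rw [hw]
        unfold stepLeft
        rw [if_neg]
        rintro ⟨-, hcond⟩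
        exact hne hcond
      rw [hsl]
      simp
  · rw [PS, finsum_mem_eq_finite_toFinset_sum _ (pathSet_finite a b2),
      finsum_mem_eq_finite_toFinset_sum _ (pathSet_finite a b2), Finset.mul_sum]
    apply Finset.sum_congr rfl
    intro t ht
    rw [Set.Finite.mem_toFinset] at ht
    rcases t with _ | ⟨w, t'⟩
    · exact absurd ht.1 (by simp)
    · have hw : w = b2 := by have := ht.1; simpa using this
      rw [pathW_cons a v w t' ht.2.2]
      congr 1
      rw [hw]
      unfold stepLeft
      rw [if_pos ⟨hv, hb2⟩]
      apply Finset.prod_congr _ (fun _ _ => rfl)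
      ext x
      simp only [Finset.mem_Ioc, Finset.mem_Icc]
      omega



/-! ### The monomial identities -/

/-- `D_j / (x₁ ⋯ x_j)`. -/
def Eprod (a : List ℕ) (j : ℕ) : KK :=
  (∏ i ∈ Finset.Icc 1 j, triDen a i) / ∏ i ∈ Finset.Icc 1 j, xv a i

/-- The value attached to the vertex `v` : `E(v-1) ⬝ PS(v)`; it equals `1` for `v ≤ 1`. -/
def vVal (a : List ℕ) (v : ℕ) : KK := Eprod a (v - 1) * PS a v

lemma Eprod_zero : Eprod a 0 = 1 := by simp [Eprod]

lemma Eprod_succ (j : ℕ) : Eprod a (j + 1) = Eprod a j * (triDen a (j + 1) / xv a (j + 1)) := by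
  unfold Eprod
  rw [Finset.prod_Icc_succ_top (by omega : 1 ≤ j + 1),
    Finset.prod_Icc_succ_top (by omega : 1 ≤ j + 1)]
  have h1 : (∏ i ∈ Finset.Icc 1 j, xv a i) ≠ 0 := Finset.prod_ne_zero_iff.mpr fun i _ => xv_ne_zero a i
  field_simp

lemma vVal_bot (v : ℕ) (hv : v ≤ 1) : vVal a v = 1 := by
  rw [vVal, PS_bot a v hv]
  have : v - 1 = 0 := by omega
  rw [this, Eprod_zero, one_mul]

lemma edgeIdx_succ' (m : ℕ) (hm : 1 ≤ m) :
    edgeIdx a m = if isRight a m then ((edgeIdx a (m - 1)).1, m + 1)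
      else (m + 1, (edgeIdx a (m - 1)).2) := by
  obtain ⟨t, rfl⟩ : ∃ t, m = t + 1 := ⟨m - 1, by omega⟩
  rw [edgeIdx]
  simp

lemma triDen_succ (m : ℕ) (hm : 1 ≤ m) :
    triDen a (m + 1) = if isRight a (m + 1) then (if isRight a m then xv a m else 1)
      else (if isRight a m then xv a m * xv a (m + 2) else xv a (m + 2)) := by
  unfold triDen
  rw [if_neg (by omega : ¬ m + 1 = 1)]
  simp only [Nat.add_sub_cancel]

lemma triW_succ (m : ℕ) (hm : 1 ≤ m) :
    triW a (m + 1) = if isRight a (m + 1)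
      then (if isRight a m then yv (m + 1) * xv a (m + 2) / xv a m
        else yv (m + 1) * xv a m * xv a (m + 2))
      else (if isRight a m then yv (m + 1) / (xv a m * xv a (m + 2))
        else yv (m + 1) * xv a m / xv a (m + 2)) := by
  unfold triW
  rw [if_neg (by omega : ¬ m + 1 = 1)]
  simp only [Nat.add_sub_cancel]

/-- The two key monomial identities. -/
lemma AB (m : ℕ) (hm : 1 ≤ m) :
    (Eprod a m * xv a m =
      Eprod a ((edgeIdx a (m - 1)).1 - 1) * (if isRight a m then 1 else xv a (m + 1))) ∧
    (Eprod a m * xv a m * (∏ i ∈ Finset.Icc ((edgeIdx a (m - 1)).2) m, triW a i) =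
      (∏ i ∈ Finset.Icc ((edgeIdx a (m - 1)).2) m, yv i) *
        Eprod a ((edgeIdx a (m - 1)).2 - 1) * (if isRight a m then xv a (m + 1) else 1)) := by
  induction m, hm using Nat.le_induction with
  | base =>
      have he : edgeIdx a 0 = (0, 1) := rfl
      have h1 : Eprod a 1 * xv a 1 = triDen a 1 := by
        rw [show (1 : ℕ) = 0 + 1 from rfl, Eprod_succ, Eprod_zero, one_mul,
          div_mul_cancel₀ _ (xv_ne_zero a 1)]
      have hD : triDen a 1 = if isRight a 1 then 1 else xv a 2 := by
        unfold triDen; rw [if_pos rfl]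
      have hW : triW a 1 = if isRight a 1 then yv 1 * xv a 2 else yv 1 / xv a 2 := by
        unfold triW; rw [if_pos rfl]
      constructor
      · rw [h1, hD, he]
        simp [Eprod_zero]
      · rw [h1, he]
        simp only [Finset.Icc_self, Finset.prod_singleton]
        rw [hD, hW]
        have := xv_ne_zero a 2
        split_ifs
        · rw [Eprod_zero]
          ring_nf
          try simp
        · rw [Eprod_zero]
          field_simp
  | succ m hm ih =>
      obtain ⟨ihA, ihB⟩ := ih
      have he := edgeIdx_succ' a m hm
      have hD := triDen_succ a m hm
      have hW := triW_succ a m hm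
      have hxm := xv_ne_zero a m
      have hxm1 := xv_ne_zero a (m + 1)
      have hxm2 := xv_ne_zero a (m + 2)
      have hmm : m + 1 - 1 = m := by omega
      have hstep : Eprod a (m + 1) * xv a (m + 1) = Eprod a m * triDen a (m + 1) := by
        rw [Eprod_succ]
        field_simp
      rw [hmm, he]
      by_cases r1 : isRight a m
      · rw [if_pos r1]
        simp only
        rw [if_pos r1, mul_one] at ihA
        constructor
        · by_cases r2 : isRight a (m + 1)
          · have hD' : triDen a (m + 1) = xv a m := by rw [hD, if_pos r2, if_pos r1]
            rw [if_pos r2, mul_one, hstep, hD', ← ihA]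
          · have hD' : triDen a (m + 1) = xv a m * xv a (m + 2) := by
              rw [hD, if_neg r2, if_pos r1]
            rw [if_neg r2, hstep, hD', ← ihA]
            ring
        · simp only [Finset.Icc_self, Finset.prod_singleton, Nat.add_sub_cancel]
          rw [hstep]
          by_cases r2 : isRight a (m + 1)
          · have hD' : triDen a (m + 1) = xv a m := by rw [hD, if_pos r2, if_pos r1]
            have hW' : triW a (m + 1) = yv (m + 1) * xv a (m + 2) / xv a m := by
              rw [hW, if_pos r2, if_pos r1]
            rw [if_pos r2, hD', hW']
            field_simp
          · have hD' : triDen a (m + 1) = xv a m * xv a (m + 2) := by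
              rw [hD, if_neg r2, if_pos r1]
            have hW' : triW a (m + 1) = yv (m + 1) / (xv a m * xv a (m + 2)) := by
              rw [hW, if_neg r2, if_pos r1]
            rw [if_neg r2, hD', hW', mul_one]
            field_simp
      · rw [if_neg r1]
        simp only
        rw [if_neg r1, mul_one] at ihB
        have hc2 : (edgeIdx a (m - 1)).2 ≤ m := by
          have := edgeIdx_le a (m - 1)
          omega
        constructor
        · rw [Nat.add_sub_cancel, hstep]
          by_cases r2 : isRight a (m + 1)
          · have hD' : triDen a (m + 1) = 1 := by rw [hD, if_pos r2, if_neg r1]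
            rw [if_pos r2, hD', mul_one]
          · have hD' : triDen a (m + 1) = xv a (m + 2) := by rw [hD, if_neg r2, if_neg r1]
            rw [if_neg r2, hD']
        · rw [Finset.prod_Icc_succ_top (by omega : (edgeIdx a (m - 1)).2 ≤ m + 1),
            Finset.prod_Icc_succ_top (by omega : (edgeIdx a (m - 1)).2 ≤ m + 1),
            ← mul_assoc, hstep]
          by_cases r2 : isRight a (m + 1)
          · have hD' : triDen a (m + 1) = 1 := by rw [hD, if_pos r2, if_neg r1]
            have hW' : triW a (m + 1) = yv (m + 1) * xv a m * xv a (m + 2) := by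
              rw [hW, if_pos r2, if_neg r1]
            rw [if_pos r2, hD', hW', mul_one]
            linear_combination (yv (m + 1) * xv a (m + 2)) * ihB
          · have hD' : triDen a (m + 1) = xv a (m + 2) := by rw [hD, if_neg r2, if_neg r1]
            have hW' : triW a (m + 1) = yv (m + 1) * xv a m / xv a (m + 2) := by
              rw [hW, if_neg r2, if_neg r1]
            rw [if_neg r2, hD', hW', mul_one]
            field_simp
            linear_combination yv (m + 1) * ihB

/-! ### Infrastructure for the seed induction -/

lemma seedAfter_zero : seedAfter a 0 = initSeed a := rfl

lemma seedAfter_succ (k : ℕ) :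
    seedAfter a (k + 1) = mutate a (seedAfter a k) (k + 1) := by
  unfold seedAfter
  rw [List.range'_1_concat, List.foldl_append, List.foldl_cons, List.foldl_nil,
    Nat.add_comm 1 k]

lemma initB (i j : ℕ) : (initSeed a).B i j =
    if 1 ≤ i ∧ j = i + 1 ∧ j ≤ a.sum - 1 then (if isRight a i then -1 else 1)
    else if 1 ≤ j ∧ i = j + 1 ∧ i ≤ a.sum - 1 then (if isRight a j then 1 else -1)
    else 0 := rfl

lemma initB_zero (i j : ℕ) (h1 : j ≠ i + 1) (h2 : i ≠ j + 1) : (initSeed a).B i j = 0 := by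
  rw [initB, if_neg (by tauto), if_neg (by tauto)]

lemma initB_succ (i : ℕ) (h1 : 1 ≤ i) (h2 : i + 1 ≤ a.sum - 1) :
    (initSeed a).B i (i + 1) = if isRight a i then -1 else 1 := by
  rw [initB, if_pos ⟨h1, rfl, h2⟩]

lemma initB_succ' (i : ℕ) (h1 : 1 ≤ i) (h2 : i + 1 ≤ a.sum - 1) :
    (initSeed a).B (i + 1) i = if isRight a i then 1 else -1 := by
  rw [initB, if_neg (by omega), if_pos ⟨h1, rfl, by omega⟩]

/-- Product of a function which is `1` away from two points. -/
lemma prod_two_points (f : ℕ → KK) (s : Finset ℕ) (p q : ℕ) (hpq : p ≠ q)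
    (h : ∀ i ∈ s, i ≠ p → i ≠ q → f i = 1) :
    ∏ i ∈ s, f i = (if p ∈ s then f p else 1) * (if q ∈ s then f q else 1) := by
  by_cases hp : p ∈ s
  · rw [← Finset.mul_prod_erase s f hp, if_pos hp]
    by_cases hq : q ∈ s
    · rw [← Finset.mul_prod_erase (s.erase p) f (Finset.mem_erase.mpr ⟨fun h => hpq h.symm, hq⟩),
        if_pos hq]
      have h1 : ∏ x ∈ (s.erase p).erase q, f x = 1 :=
        Finset.prod_eq_one fun i hi => by
          have h2 := Finset.mem_erase.mp hi
          have h3 := Finset.mem_erase.mp h2.2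
          exact h i h3.2 h3.1 h2.1
      rw [h1]
      try ring
    · rw [if_neg hq]
      have h1 : ∏ x ∈ s.erase p, f x = 1 :=
        Finset.prod_eq_one fun i hi => by
          have h2 := Finset.mem_erase.mp hi
          exact h i h2.2 h2.1 (fun hiq => hq (hiq ▸ h2.2))
      rw [h1]
      try ring
  · rw [if_neg hp]
    by_cases hq : q ∈ s
    · rw [← Finset.mul_prod_erase s f hq, if_pos hq]
      have h1 : ∏ x ∈ s.erase q, f x = 1 :=
        Finset.prod_eq_one fun i hi => by
          have h2 := Finset.mem_erase.mp hi
          exact h i h2.2 (fun hip => hp (hip ▸ h2.2)) h2.1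
      rw [h1]
      try ring
    · rw [if_neg hq]
      have h1 : ∏ x ∈ s, f x = 1 :=
        Finset.prod_eq_one fun i hi =>
          h i hi (fun hip => hp (hip ▸ hi)) (fun hiq => hq (hiq ▸ hi))
      rw [h1]
      try ring

lemma tropEval_zero (e : ℕ → ℤ) (he : ∀ i, 1 ≤ i → i ≤ a.sum - 1 → e i = 0) :
    tropEval a e = 1 := by
  unfold tropEval
  apply Finset.prod_eq_one
  intro i hi
  rw [Finset.mem_Icc] at hi
  rw [he i hi.1 hi.2, zpow_zero]

lemma tropEval_indicator (c d : ℕ) (hc : 1 ≤ c) (hd : d ≤ a.sum - 1) :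
    tropEval a (fun i => if c ≤ i ∧ i ≤ d then 1 else 0) = ∏ i ∈ Finset.Icc c d, yv i := by
  unfold tropEval
  rw [← Finset.prod_subset (Finset.Icc_subset_Icc hc hd) (fun x _ hx2 => ?_)]
  · apply Finset.prod_congr rfl
    intro i hi
    rw [Finset.mem_Icc] at hi
    show yv i ^ (if c ≤ i ∧ i ≤ d then (1 : ℤ) else 0) = yv i
    rw [if_pos hi, zpow_one]
  · rw [Finset.mem_Icc] at hx2
    show yv x ^ (if c ≤ x ∧ x ≤ d then (1 : ℤ) else 0) = 1
    rw [if_neg hx2, zpow_zero]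

/-! ### The seed invariant -/

/-- The column of the exchange matrix at the active vertex. -/
def colV (a : List ℕ) (k i : ℕ) : ℤ :=
  if i + 1 = (edgeIdx a k).2 then 1 else if i + 1 = (edgeIdx a k).1 then -1 else 0

/-- The invariant describing the seed after the first `k` mutations. -/
def Inv (a : List ℕ) (k : ℕ) : Prop :=
  (∀ i j, 1 ≤ i → i ≤ a.sum - 1 → 1 ≤ j → j ≤ a.sum - 1 → k + 2 ≤ max i j →
      (seedAfter a k).B i j = (initSeed a).B i j) ∧
  (∀ i, 1 ≤ i → i ≤ k → k + 1 ≤ a.sum - 1 →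
      (seedAfter a k).B i (k + 1) = colV a k i ∧
      (seedAfter a k).B (k + 1) i = -colV a k i) ∧
  (k + 1 ≤ a.sum - 1 → (seedAfter a k).B (k + 1) (k + 1) = 0) ∧
  (∀ j, k + 1 ≤ j → j ≤ a.sum - 1 → ∀ i,
      (seedAfter a k).u j i =
        if (if j = k + 1 then (edgeIdx a k).2 else j) ≤ i ∧ i ≤ j then 1 else 0) ∧
  (∀ j, 1 ≤ j → j ≤ a.sum - 1 →
      (seedAfter a k).X j = if j ≤ k then vVal a (j + 1) else xv a j)

lemma inv_zero : Inv a 0 := by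
  refine ⟨fun i j _ _ _ _ _ => rfl, fun i h1 h2 _ => absurd h2 (by omega), ?_, ?_, ?_⟩
  · intro _
    exact initB_zero a 1 1 (by omega) (by omega)
  · intro j hj _ i
    show (if i = j then (1 : ℤ) else 0) = _
    have h02 : (edgeIdx a 0).2 = 1 := rfl
    by_cases hj1 : j = 0 + 1
    · rw [if_pos hj1, h02]
      split_ifs <;> omega
    · rw [if_neg hj1]
      split_ifs <;> omega
  · intro j hj _
    show xv a j = _
    rw [if_neg (by omega)]

lemma inv_step (k : ℕ) (hk : k + 1 ≤ a.sum - 1) (IH : Inv a k) : Inv a (k + 1) := by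
  obtain ⟨IH1, IH2, IH3, IH4, IH5⟩ := IH
  have hb1le : (edgeIdx a k).1 ≤ k + 1 := (edgeIdx_le a k).1
  have hb2le : (edgeIdx a k).2 ≤ k + 1 := (edgeIdx_le a k).2
  have hb2pos : 1 ≤ (edgeIdx a k).2 := edgeIdx_snd_pos a k
  have hbne : (edgeIdx a k).1 ≠ (edgeIdx a k).2 := edgeIdx_ne a k
  have he : edgeIdx a (k + 1) = if isRight a (k + 1) then ((edgeIdx a k).1, k + 2)
      else (k + 2, (edgeIdx a k).2) := by
    have h := edgeIdx_succ' a (k + 1) (by omega)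
    simpa using h
  have he1 : isRight a (k + 1) → (edgeIdx a (k + 1)).1 = (edgeIdx a k).1 := by
    intro r; rw [he, if_pos r]
  have he2 : isRight a (k + 1) → (edgeIdx a (k + 1)).2 = k + 2 := by
    intro r; rw [he, if_pos r]
  have he1' : ¬isRight a (k + 1) → (edgeIdx a (k + 1)).1 = k + 2 := by
    intro r; rw [he, if_neg r]
  have he2' : ¬isRight a (k + 1) → (edgeIdx a (k + 1)).2 = (edgeIdx a k).2 := by
    intro r; rw [he, if_neg r]
  have hB' : ∀ i j, (seedAfter a (k + 1)).B i j =
      if i = k + 1 ∨ j = k + 1 then -(seedAfter a k).B i j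
      else (seedAfter a k).B i j + ((seedAfter a k).B i (k + 1)).sign *
        max ((seedAfter a k).B i (k + 1) * (seedAfter a k).B (k + 1) j) 0 := by
    intro i j
    rw [seedAfter_succ]
    rfl
  have hu' : ∀ j i, (seedAfter a (k + 1)).u j i =
      if j = k + 1 then -(seedAfter a k).u (k + 1) i
      else (seedAfter a k).u j i + max ((seedAfter a k).B (k + 1) j) 0 *
        (seedAfter a k).u (k + 1) i +
        (-(seedAfter a k).B (k + 1) j) * min ((seedAfter a k).u (k + 1) i) 0 := by
    intro j i
    rw [seedAfter_succ]
    rfl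
  have hX' : ∀ j, (seedAfter a (k + 1)).X j =
      if j = k + 1 then
        ((∏ i ∈ Finset.Icc 1 (a.sum - 1), (seedAfter a k).X i ^
            max (-(seedAfter a k).B i (k + 1)) 0) +
          tropEval a ((seedAfter a k).u (k + 1)) *
            ∏ i ∈ Finset.Icc 1 (a.sum - 1), (seedAfter a k).X i ^
              max ((seedAfter a k).B i (k + 1)) 0) /
        (tropEval a (fun i => min ((seedAfter a k).u (k + 1) i) 0) * (seedAfter a k).X (k + 1))
      else (seedAfter a k).X j := by
    intro j
    rw [seedAfter_succ]
    rfl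
  -- the value of the old matrix in column and row `k + 1`
  have hcol : ∀ i, 1 ≤ i → i ≤ a.sum - 1 → (seedAfter a k).B i (k + 1) =
      if i ≤ k then colV a k i
      else if i = k + 2 then (if isRight a (k + 1) then 1 else -1) else 0 := by
    intro i h1 h2
    rcases Nat.lt_or_ge k i with h | h
    · rw [if_neg (by omega)]
      rcases Nat.eq_or_lt_of_le h with h' | h'
      · rw [if_neg (by omega), ← h']
        exact IH3 hk
      · rw [IH1 i (k + 1) h1 h2 (by omega) hk (by omega)]
        by_cases h'' : i = k + 2
        · subst h''
          rw [if_pos rfl]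
          exact initB_succ' a (k + 1) (by omega) (by omega)
        · rw [if_neg h'']
          exact initB_zero a i (k + 1) (by omega) (by omega)
    · rw [if_pos h]
      exact (IH2 i h1 h hk).1
  have hrow : ∀ j, 1 ≤ j → j ≤ a.sum - 1 → (seedAfter a k).B (k + 1) j =
      if j ≤ k then -colV a k j
      else if j = k + 2 then (if isRight a (k + 1) then -1 else 1) else 0 := by
    intro j h1 h2
    rcases Nat.lt_or_ge k j with h | h
    · rw [if_neg (by omega)]
      rcases Nat.eq_or_lt_of_le h with h' | h'
      · rw [if_neg (by omega), ← h']
        exact IH3 hk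
      · rw [IH1 (k + 1) j (by omega) hk h1 h2 (by omega)]
        by_cases h'' : j = k + 2
        · subst h''
          rw [if_pos rfl]
          exact initB_succ a (k + 1) (by omega) (by omega)
        · rw [if_neg h'']
          exact initB_zero a (k + 1) j (by omega) (by omega)
    · rw [if_pos h]
      exact (IH2 j h1 h hk).2
  have hu1 : ∀ i, (seedAfter a k).u (k + 1) i =
      if (edgeIdx a k).2 ≤ i ∧ i ≤ k + 1 then 1 else 0 := by
    intro i
    have h := IH4 (k + 1) le_rfl hk i
    rwa [if_pos rfl] at h
  refine ⟨?_, ?_, ?_, ?_, ?_⟩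
  · -- clause 1 : untouched part of the matrix
    intro i j h1 h2 h3 h4 h5
    rw [hB' i j]
    by_cases hik : i = k + 1
    · subst hik
      rw [if_pos (Or.inl rfl), hrow j h3 h4, if_neg (by omega), if_neg (by omega),
        initB_zero a (k + 1) j (by omega) (by omega)]
      ring
    · by_cases hjk : j = k + 1
      · subst hjk
        rw [if_pos (Or.inr rfl), hcol i h1 h2, if_neg (by omega), if_neg (by omega),
          initB_zero a i (k + 1) (by omega) (by omega)]
        ring
      · rw [if_neg (by tauto), IH1 i j h1 h2 h3 h4 (by omega)]
        rcases Nat.lt_or_ge i (k + 3) with hi | hi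
        · -- then `j ≥ k + 3` so the row entry vanishes
          have hj : k + 3 ≤ j := by omega
          rw [hrow j h3 h4, if_neg (by omega), if_neg (by omega), mul_zero]
          simp
        · rw [hcol i h1 h2, if_neg (by omega), if_neg (by omega)]
          simp
  · -- clause 2 : the new column and row
    intro i h1 h2 hk2
    have hBk1k2 : (seedAfter a k).B (k + 1) (k + 2) =
        if isRight a (k + 1) then -1 else 1 := by
      rw [hrow (k + 2) (by omega) hk2, if_neg (by omega), if_pos rfl]
    have hBk2k1 : (seedAfter a k).B (k + 2) (k + 1) =
        if isRight a (k + 1) then 1 else -1 := by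
      rw [hcol (k + 2) (by omega) hk2, if_neg (by omega), if_pos rfl]
    by_cases hik : i = k + 1
    · -- the apex entries
      subst hik
      have hcvK : colV a (k + 1) (k + 1) = if isRight a (k + 1) then 1 else -1 := by
        by_cases r : isRight a (k + 1)
        · rw [if_pos r]
          unfold colV
          rw [he2 r, if_pos (by omega : k + 1 + 1 = k + 2)]
        · rw [if_neg r]
          unfold colV
          rw [he2' r, he1' r, if_neg (by omega : ¬ k + 1 + 1 = (edgeIdx a k).2),
            if_pos (by omega : k + 1 + 1 = k + 2)]
      constructor
      · rw [hB' (k + 1) (k + 1 + 1), if_pos (Or.inl rfl), hBk1k2, hcvK]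
        by_cases r : isRight a (k + 1) <;> simp [r]
      · rw [hB' (k + 1 + 1) (k + 1), if_pos (Or.inr rfl), hBk2k1, hcvK]
    · -- entries in the old range
      have hik' : i ≤ k := by omega
      have hcv' : colV a (k + 1) i =
          if isRight a (k + 1) then (if i + 1 = (edgeIdx a k).1 then -1 else 0)
          else (if i + 1 = (edgeIdx a k).2 then 1 else 0) := by
        by_cases r : isRight a (k + 1)
        · rw [if_pos r]
          unfold colV
          rw [he2 r, he1 r, if_neg (by omega : ¬ i + 1 = k + 2)]
        · rw [if_neg r]
          unfold colV
          rw [he2' r, he1' r, if_neg (by omega : ¬ i + 1 = k + 2)]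
      have hBik2 : (seedAfter a k).B i (k + 2) = 0 := by
        rw [IH1 i (k + 2) h1 (by omega) (by omega) hk2 (by omega)]
        exact initB_zero a i (k + 2) (by omega) (by omega)
      have hBk2i : (seedAfter a k).B (k + 2) i = 0 := by
        rw [IH1 (k + 2) i (by omega) hk2 h1 (by omega) (by omega)]
        exact initB_zero a (k + 2) i (by omega) (by omega)
      have hBik1 : (seedAfter a k).B i (k + 1) = colV a k i := (IH2 i h1 hik' hk).1
      have hBk1i : (seedAfter a k).B (k + 1) i = -colV a k i := (IH2 i h1 hik' hk).2
      have hcvtri : colV a k i = 1 ∧ i + 1 = (edgeIdx a k).2 ∧ i + 1 ≠ (edgeIdx a k).1 ∨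
          colV a k i = -1 ∧ i + 1 = (edgeIdx a k).1 ∧ i + 1 ≠ (edgeIdx a k).2 ∨
          colV a k i = 0 ∧ i + 1 ≠ (edgeIdx a k).1 ∧ i + 1 ≠ (edgeIdx a k).2 := by
        unfold colV
        split_ifs with hA hB
        · exact Or.inl ⟨rfl, hA, by omega⟩
        · exact Or.inr (Or.inl ⟨rfl, hB, hA⟩)
        · exact Or.inr (Or.inr ⟨rfl, hB, hA⟩)
      constructor
      · rw [hB' i (k + 1 + 1), if_neg (by omega), hBik2, hBik1, hBk1k2, hcv']
        by_cases r : isRight a (k + 1)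
        · rw [if_pos r, if_pos r]
          rcases hcvtri with ⟨hv, hc, hc'⟩ | ⟨hv, hc, hc'⟩ | ⟨hv, hc, hc'⟩ <;>
            rw [hv] <;> [rw [if_neg hc']; rw [if_pos hc]; rw [if_neg hc]] <;> decide
        · rw [if_neg r, if_neg r]
          rcases hcvtri with ⟨hv, hc, hc'⟩ | ⟨hv, hc, hc'⟩ | ⟨hv, hc, hc'⟩ <;>
            rw [hv] <;> [rw [if_pos hc]; rw [if_neg hc']; rw [if_neg hc']] <;> decide
      · rw [hB' (k + 1 + 1) i, if_neg (by omega), hBk2i, hBk1i, hBk2k1, hcv']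
        by_cases r : isRight a (k + 1)
        · rw [if_pos r, if_pos r]
          rcases hcvtri with ⟨hv, hc, hc'⟩ | ⟨hv, hc, hc'⟩ | ⟨hv, hc, hc'⟩ <;>
            rw [hv] <;> [rw [if_neg hc']; rw [if_pos hc]; rw [if_neg hc]] <;> decide
        · rw [if_neg r, if_neg r]
          rcases hcvtri with ⟨hv, hc, hc'⟩ | ⟨hv, hc, hc'⟩ | ⟨hv, hc, hc'⟩ <;>
            rw [hv] <;> [rw [if_pos hc]; rw [if_neg hc']; rw [if_neg hc']] <;> decide
  · -- clause 3 : the diagonal entry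
    intro hk2
    rw [hB' (k + 2) (k + 2), if_neg (by omega)]
    have h0 : (seedAfter a k).B (k + 2) (k + 2) = 0 := by
      rw [IH1 (k + 2) (k + 2) (by omega) hk2 (by omega) hk2 (by omega)]
      exact initB_zero a (k + 2) (k + 2) (by omega) (by omega)
    have hBk1k2 : (seedAfter a k).B (k + 1) (k + 2) =
        if isRight a (k + 1) then -1 else 1 := by
      rw [hrow (k + 2) (by omega) hk2, if_neg (by omega), if_pos rfl]
    have hBk2k1 : (seedAfter a k).B (k + 2) (k + 1) =
        if isRight a (k + 1) then 1 else -1 := by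
      rw [hcol (k + 2) (by omega) hk2, if_neg (by omega), if_pos rfl]
    rw [h0, hBk1k2, hBk2k1]
    by_cases r : isRight a (k + 1)
    · rw [if_pos r, if_pos r]; decide
    · rw [if_neg r, if_neg r]; decide
  · -- clause 4 : the coefficient vectors
    intro j hj1 hj2 i
    rw [hu' j i, if_neg (by omega)]
    have hmin : min ((seedAfter a k).u (k + 1) i) 0 = 0 := by
      rw [hu1 i]
      split_ifs <;> simp
    have hujold : (seedAfter a k).u j i = if j ≤ i ∧ i ≤ j then 1 else 0 := by
      have h := IH4 j (by omega) hj2 i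
      rwa [if_neg (show ¬ j = k + 1 by omega)] at h
    by_cases hjk2 : j = k + 2
    · subst hjk2
      have hBk1k2 : (seedAfter a k).B (k + 1) (k + 2) =
          if isRight a (k + 1) then -1 else 1 := by
        rw [hrow (k + 2) (by omega) hj2, if_neg (by omega), if_pos rfl]
      rw [hBk1k2, hujold, hmin, hu1 i, if_pos (by omega : k + 2 = k + 1 + 1)]
      by_cases r : isRight a (k + 1)
      · rw [if_pos r, he2 r, (by decide : ((-1 : ℤ) ⊔ 0) = 0)]
        simp only [zero_mul, mul_zero, add_zero, neg_neg]
      · rw [if_neg r, he2' r, (by decide : ((1 : ℤ) ⊔ 0) = 1)]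
        simp only [one_mul, mul_zero, add_zero]
        split_ifs <;> omega
    · have hB0 : (seedAfter a k).B (k + 1) j = 0 := by
        rw [hrow j (by omega) hj2, if_neg (by omega), if_neg hjk2]
      rw [hB0, hujold, hmin, if_neg hjk2]
      simp
  · -- clause 5 : the cluster variables
    intro j hj1 hj2
    rw [hX' j]
    by_cases hjk : j = k + 1
    · subst hjk
      rw [if_pos rfl, if_pos le_rfl]
      have hxk1 : (seedAfter a k).X (k + 1) = xv a (k + 1) := by
        rw [IH5 (k + 1) (by omega) hk, if_neg (by omega)]
      have htropmin : tropEval a (fun i => min ((seedAfter a k).u (k + 1) i) 0) = 1 := by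
        apply tropEval_zero
        intro i _ _
        rw [hu1 i]
        split_ifs <;> simp
      have htrop : tropEval a ((seedAfter a k).u (k + 1)) =
          ∏ i ∈ Finset.Icc ((edgeIdx a k).2) (k + 1), yv i := by
        have hfun : (seedAfter a k).u (k + 1) =
            fun i => if (edgeIdx a k).2 ≤ i ∧ i ≤ k + 1 then 1 else 0 := funext hu1
        rw [hfun, tropEval_indicator a ((edgeIdx a k).2) (k + 1) hb2pos hk]
      have hP1 : (∏ i ∈ Finset.Icc 1 (a.sum - 1),
            (seedAfter a k).X i ^ (-(seedAfter a k).B i (k + 1) ⊔ 0)) =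
          vVal a (edgeIdx a k).1 * (if isRight a (k + 1) then 1 else xv a (k + 2)) := by
        have h2p := prod_two_points
          (fun i => (seedAfter a k).X i ^ (-(seedAfter a k).B i (k + 1) ⊔ 0))
          (Finset.Icc 1 (a.sum - 1)) ((edgeIdx a k).1 - 1) (k + 2) (by omega) ?side
        case side =>
          intro i hi hip hiq
          rw [Finset.mem_Icc] at hi
          rw [hcol i hi.1 hi.2]
          by_cases h1 : i ≤ k
          · rw [if_pos h1]
            have hz : -(colV a k i) ⊔ 0 = 0 := by
              unfold colV
              split_ifs with hA hB
              · decide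
              · exact absurd (by omega) hip
              · decide
            rw [hz, zpow_zero]
          · rw [if_neg h1, if_neg hiq, (by decide : (-(0 : ℤ) ⊔ 0) = 0), zpow_zero]
        rw [h2p]
        have hfp : (if (edgeIdx a k).1 - 1 ∈ Finset.Icc 1 (a.sum - 1) then
              (seedAfter a k).X ((edgeIdx a k).1 - 1) ^
                (-(seedAfter a k).B ((edgeIdx a k).1 - 1) (k + 1) ⊔ 0) else 1) =
            vVal a (edgeIdx a k).1 := by
          by_cases hb : 2 ≤ (edgeIdx a k).1
          · rw [if_pos (Finset.mem_Icc.mpr ⟨by omega, by omega⟩),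
              hcol _ (by omega) (by omega), if_pos (by omega : (edgeIdx a k).1 - 1 ≤ k)]
            have hcv : colV a k ((edgeIdx a k).1 - 1) = -1 := by
              unfold colV
              rw [if_neg (by omega), if_pos (by omega)]
            rw [hcv, (by decide : (-(-1 : ℤ) ⊔ 0) = 1), zpow_one,
              IH5 _ (by omega) (by omega), if_pos (by omega : (edgeIdx a k).1 - 1 ≤ k)]
            congr 1
            omega
          · rw [if_neg (by rw [Finset.mem_Icc]; omega), vVal_bot a _ (by omega)]
        rw [hfp]
        congr 1
        show (if k + 2 ∈ Finset.Icc 1 (a.sum - 1) then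
            (seedAfter a k).X (k + 2) ^ (-(seedAfter a k).B (k + 2) (k + 1) ⊔ 0) else 1) = _
        by_cases hq : k + 2 ≤ a.sum - 1
        · rw [if_pos (Finset.mem_Icc.mpr ⟨by omega, hq⟩), hcol (k + 2) (by omega) hq,
            if_neg (by omega), if_pos rfl, IH5 (k + 2) (by omega) hq, if_neg (by omega)]
          by_cases r : isRight a (k + 1)
          · rw [if_pos r, if_pos r, (by decide : (-(1 : ℤ) ⊔ 0) = 0), zpow_zero]
          · rw [if_neg r, if_neg r, (by decide : (-(-1 : ℤ) ⊔ 0) = 1), zpow_one]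
        · have hxx : xv a (k + 2) = 1 := by
            unfold xv
            rw [if_pos (by omega : k + 2 = a.sum)]
          rw [if_neg (by rw [Finset.mem_Icc]; omega), hxx]
          split_ifs <;> rfl
      have hP2 : (∏ i ∈ Finset.Icc 1 (a.sum - 1),
            (seedAfter a k).X i ^ ((seedAfter a k).B i (k + 1) ⊔ 0)) =
          vVal a (edgeIdx a k).2 * (if isRight a (k + 1) then xv a (k + 2) else 1) := by
        have h2p := prod_two_points
          (fun i => (seedAfter a k).X i ^ ((seedAfter a k).B i (k + 1) ⊔ 0))
          (Finset.Icc 1 (a.sum - 1)) ((edgeIdx a k).2 - 1) (k + 2) (by omega) ?side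
        case side =>
          intro i hi hip hiq
          rw [Finset.mem_Icc] at hi
          rw [hcol i hi.1 hi.2]
          by_cases h1 : i ≤ k
          · rw [if_pos h1]
            have hz : colV a k i ⊔ 0 = 0 := by
              unfold colV
              split_ifs with hA hB
              · exact absurd (by omega) hip
              · decide
              · decide
            rw [hz, zpow_zero]
          · rw [if_neg h1, if_neg hiq, (by decide : ((0 : ℤ) ⊔ 0) = 0), zpow_zero]
        rw [h2p]
        have hfp : (if (edgeIdx a k).2 - 1 ∈ Finset.Icc 1 (a.sum - 1) then
              (seedAfter a k).X ((edgeIdx a k).2 - 1) ^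
                ((seedAfter a k).B ((edgeIdx a k).2 - 1) (k + 1) ⊔ 0) else 1) =
            vVal a (edgeIdx a k).2 := by
          by_cases hb : 2 ≤ (edgeIdx a k).2
          · rw [if_pos (Finset.mem_Icc.mpr ⟨by omega, by omega⟩),
              hcol _ (by omega) (by omega), if_pos (by omega : (edgeIdx a k).2 - 1 ≤ k)]
            have hcv : colV a k ((edgeIdx a k).2 - 1) = 1 := by
              unfold colV
              rw [if_pos (by omega)]
            rw [hcv, (by decide : ((1 : ℤ) ⊔ 0) = 1), zpow_one,
              IH5 _ (by omega) (by omega), if_pos (by omega : (edgeIdx a k).2 - 1 ≤ k)]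
            congr 1
            omega
          · rw [if_neg (by rw [Finset.mem_Icc]; omega), vVal_bot a _ (by omega)]
        rw [hfp]
        congr 1
        show (if k + 2 ∈ Finset.Icc 1 (a.sum - 1) then
            (seedAfter a k).X (k + 2) ^ ((seedAfter a k).B (k + 2) (k + 1) ⊔ 0) else 1) = _
        by_cases hq : k + 2 ≤ a.sum - 1
        · rw [if_pos (Finset.mem_Icc.mpr ⟨by omega, hq⟩), hcol (k + 2) (by omega) hq,
            if_neg (by omega), if_pos rfl, IH5 (k + 2) (by omega) hq, if_neg (by omega)]
          by_cases r : isRight a (k + 1)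
          · rw [if_pos r, if_pos r, (by decide : ((1 : ℤ) ⊔ 0) = 1), zpow_one]
          · rw [if_neg r, if_neg r, (by decide : ((-1 : ℤ) ⊔ 0) = 0), zpow_zero]
        · have hxx : xv a (k + 2) = 1 := by
            unfold xv
            rw [if_pos (by omega : k + 2 = a.sum)]
          rw [if_neg (by rw [Finset.mem_Icc]; omega), hxx]
          split_ifs <;> rfl
      rw [hP1, hP2, htrop, htropmin, hxk1, one_mul,
        (show k + 1 + 1 = k + 2 by omega), div_eq_iff (xv_ne_zero a (k + 1))]
      have hA := (AB a (k + 1) (by omega)).1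
      have hB := (AB a (k + 1) (by omega)).2
      rw [Nat.add_sub_cancel] at hA hB
      rw [(show k + 1 + 1 = k + 2 by omega)] at hA hB
      have hPSrec := PS_rec a (k + 2) (by omega)
      rw [(show k + 2 - 2 = k by omega), (show k + 2 - 1 = k + 1 by omega)] at hPSrec
      unfold vVal
      rw [(show k + 2 - 1 = k + 1 by omega), hPSrec]
      linear_combination (-PS a (edgeIdx a k).1) * hA + (-PS a (edgeIdx a k).2) * hB
    · rw [if_neg hjk, IH5 j hj1 hj2]
      by_cases hjle : j ≤ k
      · rw [if_pos hjle, if_pos (by omega)]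
      · rw [if_neg hjle, if_neg (by omega)]

lemma inv_all (k : ℕ) (hk : k ≤ a.sum - 1) : Inv a k := by
  induction k with
  | zero => exact inv_zero a
  | succ n ih => exact inv_step a n hk (ih (by omega))

end Aux

/-- **Theorem (cluster expansion formula).**  Let `p/q = [a₁,…,aₙ]` be an irreducible
fraction with `0 < p/q < 1` and `N = a₁ + ⋯ + aₙ − 1`.  Then the cluster variable
`X_{p/q}` equals `(D/(x₁x₂⋯x_N)) · Σ_{γ ∈ Γ_{p/q}} w(γ)`, where
`D = ∏_{i=1}^N (the denominator of w(T_i))` and `Γ_{p/q}` is the set of all paths of the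
ancestral triangle of `p/q` (paths start at the top vertex, which has index `N + 1 = a.sum`). -/
theorem cluster_expansion_formula (a : List ℕ) (p q : ℕ)
    (hpos : ∀ x ∈ a, 0 < x) (hne : a ≠ [])
    (hp : 0 < p) (hlt : p < q) (hcop : Nat.Coprime p q)
    (hval : cf a = (p : ℚ) / q) :
    clusterVar a =
      (∏ i ∈ Finset.Icc 1 (a.sum - 1), triDen a i) /
          (∏ i ∈ Finset.Icc 1 (a.sum - 1), xv a i) *
        ∑ᶠ γ ∈ {γ : List ℕ | IsPathFrom a a.sum γ}, pathW a γ := by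
  have hs2 : 2 ≤ a.sum := by
    rcases a with _ | ⟨x, t⟩
    · exact absurd rfl hne
    · by_contra hcon
      push_neg at hcon
      have hx : 0 < x := hpos x (by simp)
      have hsum : (x :: t).sum = x + t.sum := List.sum_cons
      have ht : t = [] := by
        rcases t with _ | ⟨y, t'⟩
        · rfl
        · have hy : 0 < y := hpos y (by simp)
          have h2 : (y :: t').sum = y + t'.sum := List.sum_cons
          omega
      subst ht
      have hx1 : x = 1 := by
        have hxx : [x].sum = x := by simp
        omega
      subst hx1
      have hcf : cf [1] = 1 := by
        norm_num [cf]
      rw [hval] at hcf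
      have hq0 : (q : ℚ) ≠ 0 := Nat.cast_ne_zero.mpr (by omega)
      rw [div_eq_one_iff_eq hq0] at hcf
      have hpq : p = q := Nat.cast_injective hcf
      omega
  have hN : 1 ≤ a.sum - 1 := by omega
  have hInv := inv_all a (a.sum - 1) le_rfl
  have hX := hInv.2.2.2.2 (a.sum - 1) hN le_rfl
  rw [if_pos le_rfl] at hX
  show (seedAfter a (a.sum - 1)).X (a.sum - 1) = _
  rw [hX]
  unfold vVal
  rw [(show a.sum - 1 + 1 - 1 = a.sum - 1 by omega), (show a.sum - 1 + 1 = a.sum by omega)]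
  rfl

end TwoBridge

end
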